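/- Let n : ℕ and v : Fin (n+1) → ℍ. Then μ(v) = 0 if and only if ∑ a, (‖z(v a)‖² − ‖w(v a)‖²) = 0 and ∑ a, conj(z(v a)) * w(v a) = 0 (the last sum taken in ℂ). Equivalently, the zero set of the diagonal U(1)-moment map on ℍ^{n+1} consists exactly of those v whose two complex component vectors z∘v and w∘v have equal norms and are Hermitian-orthogonal. (This is the algebraic core of the identification of μ⁻¹(0) with the induced Hopf bundle over the Grassmannian Gr₂(ℂ^{n+1}) in Theorem 3.1.) -/

import Mathlib

open Quaternion Finset

/-- The imaginary unit `i` of the quaternions. -/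
noncomputable def qi : Quaternion ℝ := ⟨0, 1, 0, 0⟩

/-- The first complex component of a quaternion `h = z(h) + w(h)·j`. -/
noncomputable def zC (h : Quaternion ℝ) : ℂ := ⟨h.re, h.imI⟩

/-- The second complex component of a quaternion `h = z(h) + w(h)·j`. -/
noncomputable def wC (h : Quaternion ℝ) : ℂ := ⟨h.imJ, h.imK⟩

/-- The diagonal `U(1)`-moment map on `ℍ^{n+1}`. -/
noncomputable def μ {n : ℕ} (v : Fin (n + 1) → Quaternion ℝ) : Quaternion ℝ :=
  ∑ a, star (v a) * qi * v a

lemma term_eq (q : Quaternion ℝ) :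
    star q * qi * q =
      ⟨0, q.re ^ 2 + q.imI ^ 2 - q.imJ ^ 2 - q.imK ^ 2,
        2 * (q.imI * q.imJ - q.re * q.imK), 2 * (q.re * q.imJ + q.imI * q.imK)⟩ := by
  ext <;>
    simp [Quaternion.re_mul, Quaternion.imI_mul, Quaternion.imJ_mul, Quaternion.imK_mul,
      show qi.re = 0 from rfl, show qi.imI = 1 from rfl, show qi.imJ = 0 from rfl,
      show qi.imK = 0 from rfl] <;> ring

lemma q_sum_re {α} (s : Finset α) (f : α → Quaternion ℝ) :
    (∑ i ∈ s, f i).re = ∑ i ∈ s, (f i).re :=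
  map_sum (QuaternionAlgebra.reₗ (-1 : ℝ) (0 : ℝ) (-1 : ℝ)) f s

lemma q_sum_imI {α} (s : Finset α) (f : α → Quaternion ℝ) :
    (∑ i ∈ s, f i).imI = ∑ i ∈ s, (f i).imI :=
  map_sum (QuaternionAlgebra.imIₗ (-1 : ℝ) (0 : ℝ) (-1 : ℝ)) f s

lemma q_sum_imJ {α} (s : Finset α) (f : α → Quaternion ℝ) :
    (∑ i ∈ s, f i).imJ = ∑ i ∈ s, (f i).imJ :=
  map_sum (QuaternionAlgebra.imJₗ (-1 : ℝ) (0 : ℝ) (-1 : ℝ)) f s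

lemma q_sum_imK {α} (s : Finset α) (f : α → Quaternion ℝ) :
    (∑ i ∈ s, f i).imK = ∑ i ∈ s, (f i).imK :=
  map_sum (QuaternionAlgebra.imKₗ (-1 : ℝ) (0 : ℝ) (-1 : ℝ)) f s

/-- `μ(v) = 0` iff the two complex component vectors `z ∘ v` and `w ∘ v` have equal norms
and are Hermitian-orthogonal. -/
theorem stmt_2 (n : ℕ) (v : Fin (n + 1) → Quaternion ℝ) :
    μ v = 0 ↔
      (∑ a, (‖zC (v a)‖ ^ 2 - ‖wC (v a)‖ ^ 2) = 0) ∧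
      (∑ a, (starRingEnd ℂ) (zC (v a)) * wC (v a) = 0) := by
  have h1 : ∀ a : Fin (n + 1), ‖zC (v a)‖ ^ 2 - ‖wC (v a)‖ ^ 2 =
      (v a).re ^ 2 + (v a).imI ^ 2 - (v a).imJ ^ 2 - (v a).imK ^ 2 := by
    intro a
    rw [Complex.sq_norm, Complex.sq_norm]
    simp [zC, wC, Complex.normSq_apply]
    ring
  have hre : ∀ a : Fin (n + 1), ((starRingEnd ℂ) (zC (v a)) * wC (v a)).re =
      (v a).re * (v a).imJ + (v a).imI * (v a).imK := by
    intro a; simp [zC, wC, Complex.mul_re]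
  have him : ∀ a : Fin (n + 1), ((starRingEnd ℂ) (zC (v a)) * wC (v a)).im =
      (v a).re * (v a).imK - (v a).imI * (v a).imJ := by
    intro a; simp [zC, wC, Complex.mul_im]; ring
  have key : μ v = ⟨0,
      ∑ a, ((v a).re ^ 2 + (v a).imI ^ 2 - (v a).imJ ^ 2 - (v a).imK ^ 2),
      2 * ∑ a, ((v a).imI * (v a).imJ - (v a).re * (v a).imK),
      2 * ∑ a, ((v a).re * (v a).imJ + (v a).imI * (v a).imK)⟩ := by
    rw [μ]
    ext <;> simp only [q_sum_re, q_sum_imI, q_sum_imJ, q_sum_imK] <;> simp only [term_eq] <;>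
      simp [Finset.mul_sum, mul_sub, mul_add]
  rw [Quaternion.ext_iff, key]
  dsimp only
  simp only [Quaternion.re_zero, Quaternion.imI_zero,
    Quaternion.imJ_zero, Quaternion.imK_zero, Complex.ext_iff,
    Complex.re_sum, Complex.im_sum, Complex.zero_re, Complex.zero_im]
  simp only [h1, hre, him, mul_eq_zero, OfNat.ofNat_ne_zero, false_or, true_and]
  have hBiff : (∑ a, ((v a).imI * (v a).imJ - (v a).re * (v a).imK) = 0) ↔
      (∑ a, ((v a).re * (v a).imK - (v a).imI * (v a).imJ) = 0) := by
    constructor <;> intro h <;>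
      · rw [← neg_eq_zero, ← Finset.sum_neg_distrib] at h
        simpa [neg_sub] using h
  rw [hBiff]
  tauto
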